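/- Let ψ : ℝ₊ → (0,1] satisfy, for each R, 1/ψ(R) = Σ_{j: d_j ≤ R} 1/(1 + b_j − ψ(R)) + C(ψ(R), R), where b_j = d_j^β/(Tr^β), 0 < d_1 ≤ d_2 ≤ ... with d_j → ∞, Σ_j 1/b_j = ∞ (β > 2 and C(ψ,R) = 2πλr²∫_{R/r}^∞ s/(s^β/T + 1 − ψ)ds → 0 as R → ∞ uniformly in ψ ∈ [0,1−ε]). Suppose ψ_∞ ∈ (0,1) is the unique solution of 1/ψ = Σ_j 1/(1 + b_j − ψ) (convergent series). Then ψ(R) → ψ_∞ as R → ∞. -/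

import Mathlib

open MeasureTheory Real

set_option maxHeartbeats 1000000

/-- Continuity at infinity of the proportionally fair MAP: as the radius `R` of the
deterministic stopping set `B₀(R)` tends to infinity, the partial-information fixed
point `ψ(R)` converges to the full-information fixed point `ψ∞`. -/
theorem stmt_18 (β lam T r : ℝ) (hβ : 2 < β) (hlam : 0 < lam) (hT : 0 < T)
    (hr : 0 < r)
    (d : ℕ → ℝ) (hd : ∀ j, 0 < d j) (hdmono : Monotone d)
    (htend : Filter.Tendsto d Filter.atTop Filter.atTop)
    (hsummable : Summable fun j : ℕ => (d j) ^ (-β))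
    (ψ : ℝ → ℝ) (hψ : ∀ R, ψ R ∈ Set.Ioc (0 : ℝ) 1)
    (hfix : ∀ R > (0 : ℝ),
      1 / ψ R = (∑' j : {j : ℕ // d j ≤ R}, 1 / (1 + d j.1 ^ β / (T * r ^ β) - ψ R))
        + 2 * π * lam * r ^ 2 * ∫ s in Set.Ioi (R / r), s / (s ^ β / T + 1 - ψ R))
    (ψinf : ℝ) (hψinf : ψinf ∈ Set.Ioo (0 : ℝ) 1)
    (hfixinf : 1 / ψinf = ∑' j : ℕ, 1 / (1 + d j ^ β / (T * r ^ β) - ψinf))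
    (huniq : ∀ x ∈ Set.Ioo (0 : ℝ) 1,
      1 / x = (∑' j : ℕ, 1 / (1 + d j ^ β / (T * r ^ β) - x)) → x = ψinf) :
    Filter.Tendsto ψ Filter.atTop (nhds ψinf) := by
  classical
  obtain ⟨hψ0, hψ1⟩ := hψinf
  set b : ℕ → ℝ := fun j => d j ^ β / (T * r ^ β) with hbdef
  have hTr : (0:ℝ) < T * r ^ β := mul_pos hT (Real.rpow_pos_of_pos hr β)
  have hbpos : ∀ j, 0 < b j := fun j => div_pos (Real.rpow_pos_of_pos (hd j) β) hTr
  have hsum1b : Summable fun j => 1 / b j := by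
    have h1 : ∀ j, 1 / b j = (T * r ^ β) * d j ^ (-β) := by
      intro j
      simp only [hbdef]
      rw [one_div_div, Real.rpow_neg (hd j).le, div_eq_mul_inv]
    exact (hsummable.mul_left (T * r ^ β)).congr fun j => (h1 j).symm
  have hden : ∀ x : ℝ, x ≤ 1 → ∀ j, 0 < 1 + b j - x := by
    intro x hx j; have := hbpos j; linarith
  have hfpos : ∀ x : ℝ, x ≤ 1 → ∀ j, 0 < 1 / (1 + b j - x) :=
    fun x hx j => one_div_pos.mpr (hden x hx j)
  have hfle : ∀ x : ℝ, x ≤ 1 → ∀ j, 1 / (1 + b j - x) ≤ 1 / b j := by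
    intro x hx j
    exact one_div_le_one_div_of_le (hbpos j) (by linarith)
  have hfsum : ∀ x : ℝ, x ≤ 1 → Summable (fun j => 1 / (1 + b j - x)) := fun x hx =>
    Summable.of_nonneg_of_le (fun j => (hfpos x hx j).le) (hfle x hx) hsum1b
  have hGle : ∀ x y : ℝ, x ≤ y → y ≤ 1 →
      (∑' j, 1 / (1 + b j - x)) ≤ ∑' j, 1 / (1 + b j - y) := by
    intro x y hxy hy
    exact Summable.tsum_le_tsum (fun j => one_div_le_one_div_of_le (hden y hy j) (by linarith))
      (hfsum x (hxy.trans hy)) (hfsum y hy)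
  have hGinf : 1 / ψinf = ∑' j : ℕ, 1 / (1 + b j - ψinf) := hfixinf
  -- a uniform upper bound for the integral term
  have hintle : ∀ x : ℝ, x ≤ 1 → ∀ M : ℝ, 0 < M →
      (∫ s in Set.Ioi M, s / (s ^ β / T + 1 - x)) ≤ T * (-M ^ (2 - β) / (2 - β)) := by
    intro x hx M hM
    have h1β : (1:ℝ) - β < -1 := by linarith
    have hig : IntegrableOn (fun s : ℝ => T * s ^ ((1:ℝ) - β)) (Set.Ioi M) :=
      (integrableOn_Ioi_rpow_of_lt h1β hM).const_mul T
    have hle : ∀ s ∈ Set.Ioi M, s / (s ^ β / T + 1 - x) ≤ T * s ^ ((1:ℝ) - β) := by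
      intro s hs
      have hs0 : 0 < s := hM.trans hs
      have hsβ : 0 < s ^ β / T := div_pos (Real.rpow_pos_of_pos hs0 β) hT
      have h2 : s / (s ^ β / T + 1 - x) ≤ s / (s ^ β / T) :=
        div_le_div_of_nonneg_left hs0.le hsβ (by linarith)
      have heq : s / (s ^ β / T) = T * s ^ ((1:ℝ) - β) := by
        rw [Real.rpow_sub hs0, Real.rpow_one, div_div_eq_mul_div]
        ring
      rw [heq] at h2; exact h2
    have hnn : ∀ s ∈ Set.Ioi M, 0 ≤ s / (s ^ β / T + 1 - x) := by
      intro s hs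
      have hs0 : 0 < s := hM.trans hs
      have hsβ : 0 < s ^ β / T := div_pos (Real.rpow_pos_of_pos hs0 β) hT
      exact div_nonneg hs0.le (by linarith)
    have hmono : (∫ s in Set.Ioi M, s / (s ^ β / T + 1 - x))
        ≤ ∫ s in Set.Ioi M, T * s ^ ((1:ℝ) - β) := by
      refine integral_mono_of_nonneg ?_ hig ?_
      · exact (ae_restrict_iff' measurableSet_Ioi).mpr (Filter.Eventually.of_forall hnn)
      · exact (ae_restrict_iff' measurableSet_Ioi).mpr (Filter.Eventually.of_forall hle)
    have hval : (∫ s in Set.Ioi M, T * s ^ ((1:ℝ) - β)) = T * (-M ^ (2 - β) / (2 - β)) := by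
      rw [MeasureTheory.integral_const_mul, integral_Ioi_rpow_of_lt h1β hM]
      have h2 : (1:ℝ) - β + 1 = 2 - β := by ring
      rw [h2]
    rw [hval] at hmono; exact hmono
  rw [Metric.tendsto_atTop]
  intro ε hε
  obtain ⟨ε₁, hε₁def⟩ : ∃ x : ℝ, x = min (ε / 2) (min (ψinf / 2) ((1 - ψinf) / 2)) := ⟨_, rfl⟩
  have hε₁pos : 0 < ε₁ := by
    rw [hε₁def]; exact lt_min (by linarith) (lt_min (by linarith) (by linarith))
  have hlo : 0 < ψinf - ε₁ := by
    have h := (min_le_right (ε / 2) _).trans (min_le_left (ψinf / 2) ((1 - ψinf) / 2))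
    rw [← hε₁def] at h; linarith
  have hhi : ψinf + ε₁ < 1 := by
    have h := (min_le_right (ε / 2) _).trans (min_le_right (ψinf / 2) ((1 - ψinf) / 2))
    rw [← hε₁def] at h; linarith
  have hε₁ε : ε₁ < ε := by rw [hε₁def]; exact lt_of_le_of_lt (min_le_left _ _) (by linarith)
  obtain ⟨A, hA⟩ : ∃ x : ℝ, x = 1 / (ψinf - ε₁) - ∑' j, 1 / (1 + b j - (ψinf - ε₁)) := ⟨_, rfl⟩
  obtain ⟨B, hB⟩ : ∃ x : ℝ, x = 1 / (ψinf + ε₁) - ∑' j, 1 / (1 + b j - (ψinf + ε₁)) := ⟨_, rfl⟩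
  have hApos : 0 < A := by
    have h1 : (∑' j, 1 / (1 + b j - (ψinf - ε₁))) ≤ ∑' j, 1 / (1 + b j - ψinf) :=
      hGle _ _ (by linarith) hψ1.le
    have h2 : 1 / ψinf < 1 / (ψinf - ε₁) := one_div_lt_one_div_of_lt hlo (by linarith)
    rw [hA]; linarith [hGinf]
  have hBneg : B < 0 := by
    have h1 : (∑' j, 1 / (1 + b j - ψinf)) ≤ ∑' j, 1 / (1 + b j - (ψinf + ε₁)) :=
      hGle _ _ (by linarith) hhi.le
    have h2 : 1 / (ψinf + ε₁) < 1 / ψinf := one_div_lt_one_div_of_lt hψ0 (by linarith)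
    rw [hB]; linarith [hGinf]
  obtain ⟨δ, hδdef⟩ : ∃ x : ℝ, x = min A (-B) := ⟨_, rfl⟩
  have hδpos : 0 < δ := by rw [hδdef]; exact lt_min hApos (by linarith)
  have hδA : δ ≤ A := by rw [hδdef]; exact min_le_left _ _
  have hδB : δ ≤ -B := by rw [hδdef]; exact min_le_right _ _
  -- choose N with small tail
  have hpart := hsum1b.hasSum.tendsto_sum_nat
  have hev : ∀ᶠ n in Filter.atTop,
      (∑' j, 1 / b j) - δ < ∑ i ∈ Finset.range n, 1 / b i :=
    hpart.eventually_const_lt (by linarith)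
  obtain ⟨N, hN⟩ := hev.exists
  have htailN : (∑' i : ℕ, 1 / b (i + N)) < δ := by
    have h := Summable.sum_add_tsum_nat_add (f := fun j => 1 / b j) N hsum1b
    linarith
  -- the integral bound tends to 0
  have htCb : Filter.Tendsto (fun R : ℝ => 2 * π * lam * r ^ 2 * T / (β - 2) * (R / r) ^ (2 - β))
      Filter.atTop (nhds 0) := by
    have h1 : Filter.Tendsto (fun R : ℝ => (R / r) ^ (-(β - 2))) Filter.atTop (nhds 0) :=
      (tendsto_rpow_neg_atTop (by linarith)).comp (Filter.tendsto_id.atTop_div_const hr)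
    have h2 := h1.const_mul (2 * π * lam * r ^ 2 * T / (β - 2))
    simp only [mul_zero] at h2
    have h3 : (2:ℝ) - β = -(β - 2) := by ring
    rw [h3]
    exact h2
  have hCb_ev : ∀ᶠ R in Filter.atTop,
      2 * π * lam * r ^ 2 * T / (β - 2) * (R / r) ^ (2 - β) < δ :=
    htCb.eventually_lt_const hδpos
  have hπ : (0:ℝ) < π := Real.pi_pos
  have hconst : (0:ℝ) < 2 * π * lam * r ^ 2 := by positivity
  have hmain : ∀ᶠ R in Filter.atTop, dist (ψ R) ψinf < ε := by
    filter_upwards [hCb_ev, Filter.eventually_ge_atTop (max (d N) 1)] with R hCR hRge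
    have hR1 : (1:ℝ) ≤ R := le_trans (le_max_right _ _) hRge
    have hR0 : 0 < R := lt_of_lt_of_le one_pos hR1
    have hRdN : d N ≤ R := le_trans (le_max_left _ _) hRge
    obtain ⟨hψR0, hψR1⟩ := hψ R
    have hM0 : 0 < R / r := div_pos hR0 hr
    -- fixed point equation in `b`-form
    have hfixR : 1 / ψ R = (∑' j : {j : ℕ // d j ≤ R}, 1 / (1 + b j.1 - ψ R))
        + 2 * π * lam * r ^ 2 * ∫ s in Set.Ioi (R / r), s / (s ^ β / T + 1 - ψ R) :=
      hfix R hR0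
    -- split the full sum
    have hsplit : (∑' j : {j : ℕ // d j ≤ R}, 1 / (1 + b j.1 - ψ R))
        + (∑' j : {j : ℕ // ¬ d j ≤ R}, 1 / (1 + b j.1 - ψ R))
        = ∑' j : ℕ, 1 / (1 + b j - ψ R) :=
      Summable.tsum_subtype_add_tsum_subtype_compl (hfsum _ hψR1) {j : ℕ | d j ≤ R}
    -- tail bounds
    have hNle : ∀ j : {j : ℕ // ¬ d j ≤ R}, N ≤ j.1 := by
      intro j
      by_contra h
      exact j.2 (le_trans (hdmono (le_of_lt (Nat.lt_of_not_le h))) hRdN)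
    have hTL0 : 0 ≤ ∑' j : {j : ℕ // ¬ d j ≤ R}, 1 / (1 + b j.1 - ψ R) :=
      tsum_nonneg fun j => (hfpos _ hψR1 j.1).le
    have hTLlt : (∑' j : {j : ℕ // ¬ d j ≤ R}, 1 / (1 + b j.1 - ψ R)) < δ := by
      have hle : (∑' j : {j : ℕ // ¬ d j ≤ R}, 1 / (1 + b j.1 - ψ R))
          ≤ ∑' i : ℕ, 1 / b (i + N) := by
        refine Summable.tsum_le_tsum_of_inj (fun j => j.1 - N) ?_ (fun c _ => (one_div_pos.mpr (hbpos _)).le)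
          ?_ ((hfsum _ hψR1).subtype _) ((summable_nat_add_iff N).mpr hsum1b)
        · intro j k h
          have hj := hNle j
          have hk := hNle k
          have h' : j.1 - N = k.1 - N := h
          exact Subtype.ext (by omega)
        · intro j
          have hj := hNle j
          have h2 : j.1 - N + N = j.1 := by omega
          rw [h2]
          exact hfle _ hψR1 j.1
      exact lt_of_le_of_lt hle htailN
    -- integral-term bounds
    have hCT0 : 0 ≤ 2 * π * lam * r ^ 2 * ∫ s in Set.Ioi (R / r), s / (s ^ β / T + 1 - ψ R) := by
      refine mul_nonneg hconst.le (setIntegral_nonneg measurableSet_Ioi fun s hs => ?_)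
      have hs0 : 0 < s := hM0.trans hs
      have hsβ : 0 < s ^ β / T := div_pos (Real.rpow_pos_of_pos hs0 β) hT
      exact div_nonneg hs0.le (by linarith)
    have hCTlt : 2 * π * lam * r ^ 2 * (∫ s in Set.Ioi (R / r), s / (s ^ β / T + 1 - ψ R)) < δ := by
      have h1 : 2 * π * lam * r ^ 2 * (∫ s in Set.Ioi (R / r), s / (s ^ β / T + 1 - ψ R))
          ≤ 2 * π * lam * r ^ 2 * (T * (-(R / r) ^ (2 - β) / (2 - β))) :=
        mul_le_mul_of_nonneg_left (hintle _ hψR1 _ hM0) hconst.le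
      have h2 : 2 * π * lam * r ^ 2 * (T * (-(R / r) ^ (2 - β) / (2 - β)))
          = 2 * π * lam * r ^ 2 * T / (β - 2) * (R / r) ^ (2 - β) := by
        have hβ2 : β - 2 ≠ 0 := by linarith
        have hβ2' : (2:ℝ) - β ≠ 0 := by linarith
        field_simp
        ring
      rw [h2] at h1
      exact lt_of_le_of_lt h1 hCR
    -- the defect of the full-information equation at ψ R
    have hφR : 1 / ψ R - (∑' j : ℕ, 1 / (1 + b j - ψ R))
        = 2 * π * lam * r ^ 2 * (∫ s in Set.Ioi (R / r), s / (s ^ β / T + 1 - ψ R))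
          - ∑' j : {j : ℕ // ¬ d j ≤ R}, 1 / (1 + b j.1 - ψ R) := by
      rw [← hsplit]
      rw [hfixR]
      ring
    have hφR_lt : 1 / ψ R - (∑' j : ℕ, 1 / (1 + b j - ψ R)) < δ := by
      rw [hφR]; linarith
    have hφR_gt : -δ < 1 / ψ R - (∑' j : ℕ, 1 / (1 + b j - ψ R)) := by
      rw [hφR]; linarith
    -- conclude
    have hub : ψ R < ψinf + ε₁ := by
      by_contra h
      push_neg at h
      have h1 : 1 / ψ R ≤ 1 / (ψinf + ε₁) :=
        one_div_le_one_div_of_le (by linarith) h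
      have h2 : (∑' j, 1 / (1 + b j - (ψinf + ε₁))) ≤ ∑' j, 1 / (1 + b j - ψ R) :=
        hGle _ _ h hψR1
      have : 1 / ψ R - (∑' j : ℕ, 1 / (1 + b j - ψ R)) ≤ B := by rw [hB]; linarith
      linarith
    have hlb : ψinf - ε₁ < ψ R := by
      by_contra h
      push_neg at h
      have h1 : 1 / (ψinf - ε₁) ≤ 1 / ψ R := one_div_le_one_div_of_le hψR0 h
      have h2 : (∑' j, 1 / (1 + b j - ψ R)) ≤ ∑' j, 1 / (1 + b j - (ψinf - ε₁)) :=
        hGle _ _ h (by linarith)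
      have : A ≤ 1 / ψ R - (∑' j : ℕ, 1 / (1 + b j - ψ R)) := by rw [hA]; linarith
      linarith
    rw [Real.dist_eq, abs_lt]
    constructor <;> linarith
  exact Filter.eventually_atTop.mp hmain
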